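/- arXiv:quant-ph/0503013 — 4 statements merged into one kernel-verified Lean document; each statement's English description precedes it below -/
import Mathlib

section
/- Let M be a p × n matrix over Z/DZ (D ≥ 2). The rows of M form a linearly independent family (i.e., the only vector c ∈ (Z/DZ)^p with c^T M = 0 is c = 0) if and only if the gcd over the integers of all p × p minors of M (together with D) equals 1. -/
open Matrix

/-- Over a field, if the rows of a `p × n` matrix are linearly independent,
then some `p × p` minor is nonzero. -/
lemma exists_minor_ne_zero {K : Type*} [Field K] {p n : ℕ}
    (A : Matrix (Fin p) (Fin n) K)
    (h : ∀ c : Fin p → K, Matrix.vecMul c A = 0 → c = 0) :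
    ∃ f : Fin p → Fin n, (A.submatrix id f).det ≠ 0 := by
  -- columns of `A` span `K^p`
  have hspan : Submodule.span K (Set.range Aᵀ) = ⊤ := by
    by_contra hne
    obtain ⟨φ, hφ0, hφ⟩ := Submodule.exists_dual_map_eq_bot_of_lt_top
      (lt_top_iff_ne_top.mpr hne) inferInstance
    set c : Fin p → K := fun i => φ fun j => if i = j then 1 else 0 with hc
    have hcA : Matrix.vecMul c A = 0 := by
      funext j
      have hmem : Aᵀ j ∈ Submodule.span K (Set.range Aᵀ) :=
        Submodule.subset_span ⟨j, rfl⟩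
      have hz : φ (Aᵀ j) = 0 := by
        have : φ (Aᵀ j) ∈ (Submodule.span K (Set.range Aᵀ)).map φ :=
          Submodule.mem_map_of_mem hmem
        rw [hφ] at this
        simpa using this
      rw [LinearMap.pi_apply_eq_sum_univ] at hz
      simpa [Matrix.vecMul, dotProduct, mul_comm, hc] using hz
    have hc0 : c = 0 := h c hcA
    apply hφ0
    apply LinearMap.ext
    intro x
    rw [LinearMap.pi_apply_eq_sum_univ φ x]
    have hz : ∀ i, φ (fun j => if i = j then 1 else 0) = 0 := fun i => congrFun hc0 i
    simp [hz]
  obtain ⟨b, hbsub, hbspan, hbind⟩ := exists_linearIndependent K (Set.range Aᵀ)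
  rw [hspan] at hbspan
  have hbfin : b.Finite := hbind.setFinite
  haveI : Fintype b := hbfin.fintype
  have hbasis : Module.Basis b K (Fin p → K) :=
    Module.Basis.mk hbind (by rw [Subtype.range_coe, hbspan])
  have hcard : Fintype.card b = p := by
    have := Module.finrank_eq_card_basis hbasis
    rw [Module.finrank_fin_fun] at this
    omega
  let e : Fin p ≃ b := (Fintype.equivFinOfCardEq hcard).symm
  have hchoice : ∀ x : b, ∃ j : Fin n, Aᵀ j = (x : Fin p → K) := fun x => hbsub x.2
  choose g hg using hchoice
  refine ⟨fun k => g (e k), ?_⟩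
  set B : Matrix (Fin p) (Fin p) K := A.submatrix id fun k => g (e k) with hB
  have hrows : (fun k => Bᵀ k) = fun k => ((e k : Fin p → K)) := by
    funext k
    have := hg (e k)
    funext i
    simpa [hB, Matrix.transpose_apply] using congr_fun this i
  have hind : LinearIndependent K fun k => Bᵀ k := by
    rw [hrows]
    exact hbind.comp e e.injective
  have hinj : Function.Injective Bᵀ.vecMul := Matrix.vecMul_injective_iff.mpr hind
  have hunit : IsUnit Bᵀ := Matrix.vecMul_injective_iff_isUnit.mp hinj
  have : IsUnit B.det := by
    rw [← Matrix.det_transpose]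
    exact (Matrix.isUnit_iff_isUnit_det _).mp hunit
  exact this.ne_zero

/-- Bezout: if `a` and `b` annihilate `x`, so does their gcd. -/
lemma gcd_annihilates {D : ℕ} {x : ZMod D} {a b : ℕ}
    (ha : (a : ZMod D) * x = 0) (hb : (b : ZMod D) * x = 0) :
    ((Nat.gcd a b : ZMod D)) * x = 0 := by
  have hg : ((Nat.gcd a b : ℤ) : ZMod D) = ((a : ℤ) * Int.gcdA a b + (b : ℤ) * Int.gcdB a b : ℤ) := by
    rw [← Int.gcd_eq_gcd_ab]
    norm_cast
  have : ((Nat.gcd a b : ℤ) : ZMod D) * x = 0 := by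
    rw [hg]
    push_cast
    linear_combination ((Int.gcdA a b : ZMod D)) * ha + ((Int.gcdB a b : ZMod D)) * hb
  simpa using this

/-- The rows of a `p × n` matrix over `ZMod D` are linearly independent iff the
gcd (over the integers) of all its `p × p` minors together with `D` is 1. -/
theorem stmt6 (D p n : ℕ) (hD : 2 ≤ D) (M : Matrix (Fin p) (Fin n) (ZMod D)) :
    (∀ c : Fin p → ZMod D, Matrix.vecMul c M = 0 → c = 0) ↔
    Nat.gcd
      (Finset.univ.gcd fun f : Fin p → Fin n => ((M.submatrix id f).det).val)
      D = 1 := by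
  haveI : NeZero D := ⟨by omega⟩
  set G : ℕ := Finset.univ.gcd fun f : Fin p → Fin n => ((M.submatrix id f).det).val with hG
  constructor
  · intro h
    by_contra hne
    set g := Nat.gcd G D with hg
    have hgD : g ∣ D := Nat.gcd_dvd_right _ _
    have hgne : g ≠ 0 := by
      intro h0
      have : D = 0 := Nat.eq_zero_of_gcd_eq_zero_right h0
      omega
    have hg2 : 2 ≤ g := by omega
    set q := g.minFac with hq
    have hqprime : q.Prime := Nat.minFac_prime (by omega)
    haveI : Fact q.Prime := ⟨hqprime⟩
    have hqg : q ∣ g := Nat.minFac_dvd g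
    have hqD : q ∣ D := hqg.trans hgD
    have hqG : q ∣ G := hqg.trans (Nat.gcd_dvd_left _ _)
    haveI : NeZero q := ⟨hqprime.ne_zero⟩
    set φ : ZMod D →+* ZMod q := ZMod.castHom hqD (ZMod q) with hφ
    set A : Matrix (Fin p) (Fin n) (ZMod q) := M.map φ with hA
    have hφzero : ∀ x : ZMod D, q ∣ x.val → φ x = 0 := by
      intro x hx
      rw [← ZMod.natCast_zmod_val x, map_natCast]
      exact (ZMod.natCast_eq_zero_iff _ _).mpr hx
    have hminor : ∀ f : Fin p → Fin n, (A.submatrix id f).det = 0 := by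
      intro f
      have h1 : A.submatrix id f = (M.submatrix id f).map φ := rfl
      have h2 : ((M.submatrix id f).map ⇑φ).det = φ (M.submatrix id f).det := by
        rw [← RingHom.mapMatrix_apply]
        exact (RingHom.map_det φ _).symm
      rw [h1, h2]
      exact hφzero _ (hqG.trans (Finset.gcd_dvd (Finset.mem_univ f)))
    have hdep : ¬ ∀ c : Fin p → ZMod q, Matrix.vecMul c A = 0 → c = 0 := by
      intro hA'
      obtain ⟨f, hf⟩ := exists_minor_ne_zero A hA'
      exact hf (hminor f)
    push_neg at hdep
    obtain ⟨c', hc'A, hc'ne⟩ := hdep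
    set m := D / q with hm
    have hmq : m * q = D := Nat.div_mul_cancel hqD
    have hmpos : 0 < m := Nat.div_pos (Nat.le_of_dvd (by omega) hqD) hqprime.pos
    set c : Fin p → ZMod D := fun i => ((m * (c' i).val : ℕ) : ZMod D) with hc
    have hcM : Matrix.vecMul c M = 0 := by
      funext j
      set S : ZMod D := ∑ i, (((c' i).val : ℕ) : ZMod D) * M i j with hS
      have hφS : φ S = 0 := by
        have : φ S = ∑ i, (c' i) * A i j := by
          rw [hS, map_sum]
          refine Finset.sum_congr rfl fun i _ => ?_
          rw [_root_.map_mul, map_natCast, ZMod.natCast_zmod_val]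
          rfl
        rw [this]
        have := congrFun hc'A j
        simpa [Matrix.vecMul, dotProduct] using this
      have hdvdS : q ∣ S.val := by
        have := hφzero S
        by_contra hnd
        rw [← ZMod.natCast_zmod_val S, map_natCast] at hφS
        exact hnd ((ZMod.natCast_eq_zero_iff _ _).mp hφS)
      have : (Matrix.vecMul c M) j = ((m : ℕ) : ZMod D) * S := by
        rw [hS, Finset.mul_sum]
        simp only [Matrix.vecMul, dotProduct, hc]
        refine Finset.sum_congr rfl fun i _ => ?_
        push_cast
        ring
      rw [Pi.zero_apply, this, ← ZMod.natCast_zmod_val S, ← Nat.cast_mul]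
      obtain ⟨t, ht⟩ := hdvdS
      rw [ht, show m * (q * t) = D * t by rw [← hmq]; ring]
      simp [ZMod.natCast_self]
    have hcne : c ≠ 0 := by
      obtain ⟨i, hi⟩ := Function.ne_iff.mp hc'ne
      intro h0
      have hci : c i = 0 := congrFun h0 i
      rw [hc] at hci
      have hdvd : D ∣ m * (c' i).val := (ZMod.natCast_eq_zero_iff _ _).mp hci
      have hvpos : 0 < (c' i).val := by
        rcases Nat.eq_zero_or_pos (c' i).val with h0' | h0'
        · exact absurd ((ZMod.val_eq_zero _).mp h0') hi
        · exact h0'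
      have hvlt : (c' i).val < q := ZMod.val_lt _
      have : m * (c' i).val < D := by
        calc m * (c' i).val < m * q := by exact mul_lt_mul_of_pos_left hvlt hmpos
        _ = D := hmq
      have := Nat.le_of_dvd (by positivity) hdvd
      omega
    exact hcne (h c hcM)
  · intro h1 c hc
    have key : ∀ f : Fin p → Fin n, ((M.submatrix id f).det) • c = 0 := by
      intro f
      have hsub : Matrix.vecMul c (M.submatrix id f) = 0 := by
        funext j
        have := congrFun hc (f j)
        simpa [Matrix.vecMul, dotProduct] using this
      have h2 : Matrix.vecMul c ((M.submatrix id f) * (M.submatrix id f).adjugate) = 0 := by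
        rw [← Matrix.vecMul_vecMul, hsub, Matrix.zero_vecMul]
      have h3 : Matrix.vecMul c ((M.submatrix id f).det • (1 : Matrix (Fin p) (Fin p) (ZMod D)))
          = (M.submatrix id f).det • c := by
        funext i
        simp [Matrix.vecMul, dotProduct, Matrix.one_apply, mul_ite, mul_comm]
      rwa [Matrix.mul_adjugate, h3] at h2
    funext i
    have hann : ∀ f : Fin p → Fin n, ((((M.submatrix id f).det).val : ℕ) : ZMod D) * c i = 0 := by
      intro f
      rw [ZMod.natCast_zmod_val]
      have := congrFun (key f) i
      simpa [smul_eq_mul] using this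
    have hGann : ∀ s : Finset (Fin p → Fin n),
        ((s.gcd (fun f => ((M.submatrix id f).det).val) : ℕ) : ZMod D) * c i = 0 := by
      intro s
      induction s using Finset.induction_on with
      | empty => simp
      | insert _ _ hx ih =>
        rw [Finset.gcd_insert]
        exact gcd_annihilates (hann _) ih
    have hfinal : ((Nat.gcd G D : ℕ) : ZMod D) * c i = 0 :=
      gcd_annihilates (hGann Finset.univ) (by simp [ZMod.natCast_self])
    rw [h1] at hfinal
    simpa using hfinal
end

section
/- Any linearly independent family of k vectors in (Z/DZ)^n (k ≤ n) can be extended to a family of n vectors forming a basis of (Z/DZ)^n as a Z/DZ-module. -/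
open Matrix Finset

private lemma divp_mul_eq_zero {D p : ℕ} [NeZero D] (hp : p ∣ D) (x : ZMod D)
    (hx : ZMod.castHom hp (ZMod p) x = 0) : ((D / p : ℕ) : ZMod D) * x = 0 := by
  have hx' : (x.val : ZMod p) = 0 := by
    rw [ZMod.natCast_val, ← ZMod.castHom_apply (h := hp)]; exact hx
  obtain ⟨t, ht⟩ := (ZMod.natCast_eq_zero_iff _ _).mp hx'
  have hDp : D / p * p = D := Nat.div_mul_cancel hp
  calc ((D / p : ℕ) : ZMod D) * x = ((D / p * x.val : ℕ) : ZMod D) := by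
        rw [Nat.cast_mul, ZMod.natCast_zmod_val]
    _ = 0 := by
        rw [ZMod.natCast_eq_zero_iff]
        exact ⟨t, by rw [ht, ← mul_assoc, hDp]⟩

private lemma redLinIndep {D n m : ℕ} [NeZero D] {p : ℕ} (pp : p.Prime) (hp : p ∣ D)
    (w : Fin m → Fin n → ZMod D)
    (hw : ∀ a : Fin m → ZMod D, ∑ i, a i • w i = 0 → a = 0) :
    LinearIndependent (ZMod p) (fun i => fun j => ZMod.castHom hp (ZMod p) (w i j)) := by
  haveI : NeZero p := ⟨pp.pos.ne'⟩
  rw [Fintype.linearIndependent_iff]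
  intro a ha i
  set a' : Fin m → ZMod D :=
    fun i => ((D / p : ℕ) : ZMod D) * (((a i).val : ℕ) : ZMod D) with ha'def
  have key : ∑ i, a' i • w i = 0 := by
    funext j
    have hsj : ZMod.castHom hp (ZMod p) (∑ i, (((a i).val : ℕ) : ZMod D) * w i j) = 0 := by
      rw [map_sum]
      have : ∀ i, ZMod.castHom hp (ZMod p) ((((a i).val : ℕ) : ZMod D) * w i j)
          = a i * ZMod.castHom hp (ZMod p) (w i j) := by
        intro i
        rw [_root_.map_mul, map_natCast, ZMod.natCast_zmod_val]
      rw [Finset.sum_congr rfl fun i _ => this i]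
      have := congrFun ha j
      simpa [Finset.sum_apply] using this
    have h0 := divp_mul_eq_zero hp _ hsj
    have : (∑ i, a' i • w i) j
        = ((D / p : ℕ) : ZMod D) * ∑ i, (((a i).val : ℕ) : ZMod D) * w i j := by
      simp [ha'def, Finset.sum_apply, Finset.mul_sum, mul_assoc]
    rw [this, h0]; rfl
  have ha0 : a' i = 0 := congrFun (hw a' key) i
  have hdvd : D ∣ D / p * (a i).val := by
    have : ((D / p * (a i).val : ℕ) : ZMod D) = 0 := by
      rw [Nat.cast_mul]; exact ha0
    exact (ZMod.natCast_eq_zero_iff _ _).mp this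
  have hDp : D / p * p = D := Nat.div_mul_cancel hp
  have hpos : 0 < D / p := Nat.div_pos (Nat.le_of_dvd (Nat.pos_of_ne_zero (NeZero.ne D)) hp) pp.pos
  have hpdvd : p ∣ (a i).val := by
    nth_rewrite 1 [← hDp] at hdvd
    exact (Nat.mul_dvd_mul_iff_left hpos).mp hdvd
  rw [← ZMod.natCast_zmod_val (a i), ZMod.natCast_eq_zero_iff]
  exact hpdvd


private lemma isUnit_of_red {D : ℕ} (hD : 2 ≤ D) (x : ZMod D)
    (h : ∀ (p : ℕ), p.Prime → ∀ hp : p ∣ D, ZMod.castHom hp (ZMod p) x ≠ 0) :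
    IsUnit x := by
  haveI : NeZero D := ⟨by omega⟩
  rw [← ZMod.natCast_zmod_val x, ZMod.isUnit_iff_coprime]
  by_contra hco
  obtain ⟨q, hq, hqd⟩ := Nat.exists_prime_and_dvd hco
  have hqD : q ∣ D := hqd.trans (Nat.gcd_dvd_right _ _)
  have hqv : q ∣ x.val := hqd.trans (Nat.gcd_dvd_left _ _)
  apply h q hq hqD
  rw [ZMod.castHom_apply, ← ZMod.natCast_val, ZMod.natCast_eq_zero_iff]
  exact hqv

private lemma crt_surj {D : ℕ} (hD : 2 ≤ D) (f : ∀ p : D.primeFactors, ZMod (p : ℕ)) :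
    ∃ y : ZMod D, ∀ p : D.primeFactors,
      ZMod.castHom (Nat.dvd_of_mem_primeFactors p.2) (ZMod (p : ℕ)) y = f p := by
  haveI : NeZero D := ⟨by omega⟩
  have copr : Pairwise (Function.onFun Nat.Coprime fun p : D.primeFactors => (p : ℕ)) := by
    intro p q hpq
    exact (Nat.coprime_primes (Nat.prime_of_mem_primeFactors p.2)
      (Nat.prime_of_mem_primeFactors q.2)).mpr fun h => hpq (Subtype.ext h)
  have hP : (∏ p : D.primeFactors, (p : ℕ)) ∣ D := by
    have heq : ∏ p : D.primeFactors, (p : ℕ) = ∏ p ∈ D.primeFactors, p :=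
      Finset.prod_coe_sort D.primeFactors (fun x => x)
    rw [heq]
    exact Nat.prod_primeFactors_dvd D
  haveI : NeZero (∏ p : D.primeFactors, (p : ℕ)) :=
    ⟨fun h => NeZero.ne D (Nat.eq_zero_of_zero_dvd (h ▸ hP))⟩
  let e := ZMod.prodEquivPi (fun p : D.primeFactors => (p : ℕ)) copr
  set z := e.symm f with hz
  refine ⟨((z.val : ℕ) : ZMod D), fun p => ?_⟩
  have hcomp : ZMod.castHom (Nat.dvd_of_mem_primeFactors p.2) (ZMod (p : ℕ)) =
      (Pi.evalRingHom (fun q : D.primeFactors => ZMod (q : ℕ)) p).comp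
        ((e : ZMod (∏ q : D.primeFactors, (q : ℕ)) →+* ∀ q : D.primeFactors, ZMod (q : ℕ)).comp
          (ZMod.castHom hP (ZMod (∏ q : D.primeFactors, (q : ℕ))))) :=
    Subsingleton.elim _ _
  rw [hcomp]
  have hy : ZMod.castHom hP (ZMod (∏ q : D.primeFactors, (q : ℕ))) ((z.val : ℕ) : ZMod D) = z := by
    rw [map_natCast, ZMod.natCast_zmod_val]
  simp only [RingHom.comp_apply, hy]
  have : e z = f := by rw [hz]; exact e.apply_symm_apply f
  rw [show (e : ZMod (∏ q : D.primeFactors, (q : ℕ)) →+* ∀ q : D.primeFactors, ZMod (q : ℕ)) z = e z from rfl, this]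
  rfl

private lemma exists_not_mem_span {p n j : ℕ} (pp : p.Prime) (hj : j < n)
    (u : Fin j → Fin n → ZMod p) (hu : LinearIndependent (ZMod p) u) :
    ∃ x : Fin n → ZMod p, x ∉ Submodule.span (ZMod p) (Set.range u) := by
  haveI : Fact p.Prime := ⟨pp⟩
  by_contra hx
  push_neg at hx
  have hspan : ⊤ ≤ Submodule.span (ZMod p) (Set.range u) := fun y _ => hx y
  let b : Module.Basis (Fin j) (ZMod p) (Fin n → ZMod p) := Module.Basis.mk hu hspan
  have hcard := Module.finrank_eq_card_basis b
  rw [Module.finrank_pi, Fintype.card_fin, Fintype.card_fin] at hcard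
  omega

private lemma extend_aux (D n : ℕ) (hD : 2 ≤ D) (d : ℕ) :
    ∀ (j : ℕ) (hj : j + d = n) (w : Fin j → Fin n → ZMod D),
    (∀ (p : ℕ) (pp : p.Prime) (hp : p ∣ D),
       LinearIndependent (ZMod p) (fun i => fun j' => ZMod.castHom hp (ZMod p) (w i j'))) →
    ∃ W : Fin n → Fin n → ZMod D,
      (∀ i : Fin j, W (Fin.castLE (Nat.le.intro hj) i) = w i) ∧
      ∀ (p : ℕ) (pp : p.Prime) (hp : p ∣ D),
        LinearIndependent (ZMod p) (fun i => fun j' => ZMod.castHom hp (ZMod p) (W i j')) := by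
  haveI : NeZero D := ⟨by omega⟩
  induction d with
  | zero =>
    intro j hj w hw
    have hjn : n = j := by omega
    refine ⟨fun i => w (Fin.cast hjn i), fun i => ?_, fun p pp hp => ?_⟩
    · rfl
    · exact (hw p pp hp).comp (Fin.cast hjn) fun x y hxy => by
        simpa using congrArg (Fin.cast hjn.symm) hxy
  | succ d ih =>
    intro j hj w hw
    have hstep : ∀ p : D.primeFactors, ∃ x : Fin n → ZMod (p : ℕ),
        x ∉ Submodule.span (ZMod (p : ℕ)) (Set.range fun i => fun j' =>
          ZMod.castHom (Nat.dvd_of_mem_primeFactors p.2) (ZMod (p : ℕ)) (w i j')) :=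
      fun p => exists_not_mem_span (Nat.prime_of_mem_primeFactors p.2) (by omega) _
        (hw _ (Nat.prime_of_mem_primeFactors p.2) _)
    choose xp hxp using hstep
    have hcrt : ∀ j' : Fin n, ∃ y : ZMod D, ∀ p : D.primeFactors,
        ZMod.castHom (Nat.dvd_of_mem_primeFactors p.2) (ZMod (p : ℕ)) y = xp p j' :=
      fun j' => crt_surj hD fun p => xp p j'
    choose x hx using hcrt
    have hsnoc : ∀ (p : ℕ) (pp : p.Prime) (hp : p ∣ D),
        LinearIndependent (ZMod p)
          (fun (i : Fin (j + 1)) => fun j' => ZMod.castHom hp (ZMod p) ((Fin.snoc w x : Fin (j+1) → Fin n → ZMod D) i j')) := by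
      intro p pp hp
      have hmem : p ∈ D.primeFactors := Nat.mem_primeFactors.mpr ⟨pp, hp, by omega⟩
      haveI : Fact p.Prime := ⟨pp⟩
      have hcs := Fin.comp_snoc (fun u : Fin n → ZMod D => fun j' => ZMod.castHom hp (ZMod p) (u j')) w x
      have hfam : (fun i => fun j' => ZMod.castHom hp (ZMod p) ((Fin.snoc w x : Fin (j+1) → Fin n → ZMod D) i j')) =
          Fin.snoc (fun i => fun j' => ZMod.castHom hp (ZMod p) (w i j'))
            (fun j' => ZMod.castHom hp (ZMod p) (x j')) := hcs
      rw [hfam]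
      refine linearIndependent_fin_snoc.mpr ⟨hw p pp hp, ?_⟩
      have hxeq : (fun j' => ZMod.castHom hp (ZMod p) (x j')) = xp ⟨p, hmem⟩ :=
        funext fun j' => hx j' ⟨p, hmem⟩
      rw [hxeq]
      exact hxp ⟨p, hmem⟩
    obtain ⟨W, hW1, hW2⟩ := ih (j + 1) (by omega) (Fin.snoc w x : Fin (j+1) → Fin n → ZMod D) hsnoc
    refine ⟨W, fun i => ?_, hW2⟩
    have h1 : Fin.castLE (Nat.le.intro hj : j ≤ n) i
        = Fin.castLE (Nat.le.intro (by omega : (j+1) + d = n)) (Fin.castSucc i) :=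
      Fin.ext rfl
    have h2 := hW1 (Fin.castSucc i)
    rw [Fin.snoc_castSucc] at h2
    rw [h1]; exact h2

/-- Any linearly independent family of `k ≤ n` vectors in `(ZMod D)^n` extends
to a family of `n` vectors forming a basis of `(ZMod D)^n`. -/
theorem stmt7 (D n k : ℕ) (hD : 2 ≤ D) (hk : k ≤ n)
    (v : Fin k → Fin n → ZMod D)
    (hv : ∀ a : Fin k → ZMod D, ∑ i, a i • v i = 0 → a = 0) :
    ∃ w : Fin n → Fin n → ZMod D,
      (∀ i : Fin k, w (Fin.castLE hk i) = v i) ∧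
      (∀ a : Fin n → ZMod D, ∑ i, a i • w i = 0 → a = 0) ∧
      Submodule.span (ZMod D) (Set.range w) = ⊤ := by
  haveI : NeZero D := ⟨by omega⟩
  have hred : ∀ (p : ℕ) (pp : p.Prime) (hp : p ∣ D),
      LinearIndependent (ZMod p) (fun i => fun j' => ZMod.castHom hp (ZMod p) (v i j')) :=
    fun p pp hp => redLinIndep pp hp v hv
  obtain ⟨W, hW1, hW2⟩ := extend_aux D n hD (n - k) k (by omega) v hred
  set M : Matrix (Fin n) (Fin n) (ZMod D) := Matrix.of W with hM
  have hvm : ∀ a : Fin n → ZMod D, ∑ i, a i • W i = Matrix.vecMul a M := by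
    intro a; funext j'
    simp [Matrix.vecMul, dotProduct, Finset.sum_apply, hM]
  have hdet : IsUnit M.det := by
    apply isUnit_of_red hD
    intro p pp hp h0
    haveI : Fact p.Prime := ⟨pp⟩
    set Mp : Matrix (Fin n) (Fin n) (ZMod p) := (ZMod.castHom hp (ZMod p)).mapMatrix M with hMp
    have hvmp : ∀ c : Fin n → ZMod p,
        Matrix.vecMul c Mp = ∑ i, c i • (fun j' => ZMod.castHom hp (ZMod p) (W i j')) := by
      intro c; funext j'
      simp [hMp, hM, Matrix.vecMul, dotProduct, Finset.sum_apply]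
    have hli := Fintype.linearIndependent_iff.mp (hW2 p pp hp)
    have hinj : Function.Injective Mp.vecMul := by
      intro a b hab
      have hab' : a ᵥ* Mp = b ᵥ* Mp := hab
      have hzero : Matrix.vecMul (a - b) Mp = 0 := by
        rw [Matrix.sub_vecMul, hab', sub_self]
      rw [hvmp] at hzero
      have := hli (a - b) hzero
      funext i
      have := this i
      rw [Pi.sub_apply] at this
      exact sub_eq_zero.mp this
    have hunit := (Matrix.isUnit_iff_isUnit_det Mp).mp (Matrix.vecMul_injective_iff_isUnit.mp hinj)
    rw [hMp, ← RingHom.map_det, h0] at hunit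
    simp at hunit
  haveI := M.invertibleOfIsUnitDet hdet
  refine ⟨W, fun i => hW1 i, fun a ha => ?_, ?_⟩
  · rw [hvm] at ha
    have : a = Matrix.vecMul (Matrix.vecMul a M) (⅟M) := by
      rw [Matrix.vecMul_vecMul, mul_invOf_self, Matrix.vecMul_one]
    rw [this, ha, Matrix.zero_vecMul]
  · rw [eq_top_iff]
    intro y _
    have hy : y = ∑ i, (Matrix.vecMul y (⅟M)) i • W i := by
      rw [hvm, Matrix.vecMul_vecMul, invOf_mul_self, Matrix.vecMul_one]
    rw [hy]
    exact Submodule.sum_mem _ fun i _ =>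
      Submodule.smul_mem _ _ (Submodule.subset_span ⟨i, rfl⟩)
end

section
/- If V is a submodule of (Z/DZ)^n that is freely generated by a linearly independent family of d vectors, then its orthogonal complement V^⊥ = {w ∈ (Z/DZ)^n : ⟨w, v⟩ = 0 for all v ∈ V} (with respect to the standard bilinear form) is also freely generated by a linearly independent family, of cardinality n − d. -/
namespace Stmt9Aux


variable {D : ℕ}

lemma pair_sum {n : ℕ} (u : Fin n → ZMod D) {ι : Type} [Fintype ι]
    (c : ι → ZMod D) (w : ι → Fin n → ZMod D) :
    ∑ x, u x * (∑ j, c j • w j) x = ∑ j, c j * ∑ x, u x * w j x := by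
  simp only [Finset.sum_apply, Pi.smul_apply, smul_eq_mul, Finset.mul_sum]
  rw [Finset.sum_comm]
  refine Finset.sum_congr rfl fun j _ => ?_
  refine Finset.sum_congr rfl fun x _ => by ring

lemma smul_collect {n : ℕ} {ι₁ ι₂ : Type} [Fintype ι₁] [Fintype ι₂]
    (b : ι₁ → ZMod D) (k : ι₁ → ι₂ → ZMod D) (w : ι₂ → Fin n → ZMod D) :
    ∑ K, b K • (∑ j, k K j • w j) = ∑ j, (∑ K, b K * k K j) • w j := by
  simp only [Finset.smul_sum, smul_smul]
  rw [Finset.sum_comm]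
  simp [Finset.sum_smul]

lemma exists_bezout (hD : 2 ≤ D) {m : ℕ} (t : Fin m → ZMod D)
    (h : ∀ c : ZMod D, (∀ j, c * t j = 0) → c = 0) :
    ∃ s : Fin m → ZMod D, ∑ j, s j * t j = 1 := by
  haveI : NeZero D := ⟨by omega⟩
  haveI : IsPrincipalIdealRing (ZMod D) :=
    IsPrincipalIdealRing.of_surjective (Int.castRingHom (ZMod D)) ZMod.intCast_surjective
  set J : Ideal (ZMod D) := Ideal.span (Set.range t) with hJ
  set γ := Submodule.IsPrincipal.generator J with hγdef
  have hspan : Ideal.span {γ} = J := Submodule.IsPrincipal.span_singleton_generator J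
  have hdvd : ∀ j, γ ∣ t j := by
    intro j
    have ht : t j ∈ J := Ideal.subset_span (Set.mem_range_self j)
    rw [← hspan, Ideal.mem_span_singleton] at ht; exact ht
  have hunit : IsUnit γ := by
    by_contra hγ
    have hninj : ¬ Function.Injective (fun x : ZMod D => γ * x) := by
      intro hinj
      obtain ⟨y, hy⟩ := (Finite.injective_iff_surjective.mp hinj) 1
      exact hγ (IsUnit.of_mul_eq_one (a := γ) y hy)
    rw [Function.not_injective_iff] at hninj
    obtain ⟨a, b, hab, hne⟩ := hninj
    have hc : a - b ≠ 0 := sub_ne_zero.mpr hne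
    refine hc (h (a - b) ?_)
    intro j
    obtain ⟨e, he⟩ := hdvd j
    have hz : (a - b) * γ = 0 := by
      have : γ * a - γ * b = 0 := by rw [hab]; ring
      calc (a-b)*γ = γ * a - γ * b := by ring
      _ = 0 := this
    rw [he, ← mul_assoc, hz, zero_mul]
  have htop : J = ⊤ :=
    Ideal.eq_top_of_isUnit_mem _ (Submodule.IsPrincipal.generator_mem J) hunit
  have h1 : (1 : ZMod D) ∈ Submodule.span (ZMod D) (Set.range t) := by
    have : (1 : ZMod D) ∈ J := htop ▸ Submodule.mem_top
    exact this
  obtain ⟨s, hs⟩ := (Submodule.mem_span_range_iff_exists_fun (ZMod D)).mp h1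
  exact ⟨s, by simpa [smul_eq_mul] using hs⟩

lemma card_le (hD : 2 ≤ D) {d n : ℕ} (v : Fin d → Fin n → ZMod D)
    (hv : ∀ a : Fin d → ZMod D, ∑ i, a i • v i = 0 → a = 0) : d ≤ n := by
  haveI : NeZero D := ⟨by omega⟩
  have hinj : Function.Injective (fun a : Fin d → ZMod D => ∑ i, a i • v i) := by
    intro a b hab
    have h0 : ∑ i, (a - b) i • v i = 0 := by
      simp only [Pi.sub_apply, sub_smul]
      rw [Finset.sum_sub_distrib]
      rw [sub_eq_zero]
      exact hab
    have := hv _ h0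
    exact sub_eq_zero.mp this
  have hcard := Fintype.card_le_of_injective _ hinj
  simp only [Fintype.card_fun, ZMod.card, Fintype.card_fin] at hcard
  exact (Nat.pow_le_pow_iff_right (by omega : 1 < D)).mp hcard




lemma kernel_basis (hD : 2 ≤ D) {m : ℕ} (t s : Fin m → ZMod D)
    (hs : ∑ j, s j * t j = 1) :
    ∃ k : Fin (m - 1) → Fin m → ZMod D,
      (∀ b : Fin (m - 1) → ZMod D, ∑ K, b K • k K = 0 → b = 0) ∧
      (∀ c : Fin m → ZMod D,
        (∑ j, c j * t j = 0) ↔ ∃ b : Fin (m - 1) → ZMod D, c = ∑ K, b K • k K) := by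
  haveI : NeZero D := ⟨by omega⟩
  haveI : Fact (1 < D) := ⟨by omega⟩
  set tz : Fin m → ℤ := fun j => ((t j).val : ℤ) with htz
  have htc : ∀ j, ((tz j : ℤ) : ZMod D) = t j := by
    intro j
    simp [htz, ZMod.natCast_val, ZMod.cast_id]
  -- the linear functional
  set φ : (Fin m → ℤ) →ₗ[ℤ] ℤ :=
    { toFun := fun c => ∑ j, c j * tz j
      map_add' := by intro a b; simp [add_mul, Finset.sum_add_distrib]
      map_smul' := by
        intro r a
        simp [smul_eq_mul, Finset.mul_sum, mul_assoc] } with hφdef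
  have hφ : ∀ c : Fin m → ℤ, φ c = ∑ j, c j * tz j := fun c => rfl
  have hφsingle : ∀ j : Fin m, φ (Pi.single j 1) = tz j := by
    intro j
    rw [hφ]
    rw [Finset.sum_eq_single j]
    · simp
    · intro x _ hx; simp [Pi.single_apply, hx]
    · simp
  set K := LinearMap.ker φ with hK
  obtain ⟨r, κ₀⟩ := Submodule.basisOfPid (Pi.basisFun ℤ (Fin m)) K
  -- the generator of the range
  haveI hpr : Submodule.IsPrincipal (LinearMap.range φ) :=
    IsPrincipalIdealRing.principal (LinearMap.range φ)
  set g : ℤ := Submodule.IsPrincipal.generator (LinearMap.range φ) with hg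
  obtain ⟨z, hz⟩ := LinearMap.mem_range.mp (Submodule.IsPrincipal.generator_mem (LinearMap.range φ))
  have hgdvd : ∀ c : Fin m → ℤ, g ∣ φ c := by
    intro c
    have h1 : φ c ∈ LinearMap.range φ := LinearMap.mem_range_self φ c
    rw [← Submodule.IsPrincipal.span_singleton_generator (LinearMap.range φ)] at h1
    obtain ⟨a, ha⟩ := Submodule.mem_span_singleton.mp h1
    exact ⟨a, by rw [← ha]; simp [smul_eq_mul, mul_comm, hg]⟩
  -- g is a unit mod D
  have hgu : IsUnit ((g : ℤ) : ZMod D) := by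
    have hdj : ∀ j, ((g : ℤ) : ZMod D) ∣ t j := by
      intro j
      obtain ⟨e, he⟩ := hφsingle j ▸ hgdvd (Pi.single j 1)
      refine ⟨((e : ℤ) : ZMod D), ?_⟩
      rw [← htc j, he]
      push_cast
      ring
    have : ((g : ℤ) : ZMod D) ∣ 1 := by
      rw [← hs]
      refine Finset.dvd_sum fun j _ => ?_
      exact Dvd.dvd.mul_left (hdj j) (s j)
    exact isUnit_of_dvd_one this
  -- g ≠ 0
  have ht0 : ∃ j, t j ≠ 0 := by
    by_contra hall
    push_neg at hall
    rw [Finset.sum_eq_zero (fun j _ => by rw [hall j, mul_zero])] at hs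
    exact one_ne_zero hs.symm
  have hg0 : g ≠ 0 := by
    obtain ⟨j0, hj0⟩ := ht0
    intro hg0
    have := hgdvd (Pi.single j0 1)
    rw [hφsingle j0, hg0] at this
    rw [zero_dvd_iff] at this
    apply hj0
    rw [← htc j0, this]
    simp
  -- coprimality of g and D in ℤ
  have hco : IsCoprime g (D : ℤ) := by
    obtain ⟨h, hh⟩ := hgu.exists_right_inv
    have hcast : ((g * ((h.val : ℕ) : ℤ) - 1 : ℤ) : ZMod D) = 0 := by
      push_cast
      rw [show ((h.val : ℕ) : ZMod D) = h from by simp [ZMod.natCast_val, ZMod.cast_id]]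
      rw [hh]
      ring
    obtain ⟨e, he⟩ := (ZMod.intCast_zmod_eq_zero_iff_dvd _ _).mp hcast
    exact ⟨((h.val : ℕ) : ℤ), -e, by linarith⟩
  -- rank computation: r = m - 1
  have hrank : r = m - 1 := by
    let E : (K × ℤ) →ₗ[ℤ] (Fin m → ℤ) :=
      K.subtype.coprod (LinearMap.toSpanSingleton ℤ (Fin m → ℤ) z)
    have hEapp : ∀ p : K × ℤ, E p = (p.1 : Fin m → ℤ) + p.2 • z := fun p => rfl
    have hinj : Function.Injective E := by
      rw [injective_iff_map_eq_zero]
      intro p hp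
      rw [hEapp] at hp
      have hφp : p.2 * g = 0 := by
        have := congrArg φ hp
        rw [map_add, map_smul, hz] at this
        have h1 : φ (p.1 : Fin m → ℤ) = 0 := LinearMap.mem_ker.mp p.1.2
        simpa [h1, smul_eq_mul] using this
      have hp2 : p.2 = 0 := by
        rcases mul_eq_zero.mp hφp with h | h
        · exact h
        · exact absurd h hg0
      have hp1 : (p.1 : Fin m → ℤ) = 0 := by
        rw [hp2] at hp; simpa using hp
      exact Prod.ext (Subtype.ext hp1) hp2
    have hsurj : Function.Surjective E := by
      intro c
      obtain ⟨q, hq⟩ := hgdvd c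
      have hker : φ (c - q • z) = 0 := by
        rw [map_sub, map_smul, hz, hq, smul_eq_mul]; ring
      refine ⟨(⟨c - q • z, LinearMap.mem_ker.mpr hker⟩, q), ?_⟩
      rw [hEapp]; simp
    let E' : (K × ℤ) ≃ₗ[ℤ] (Fin m → ℤ) := LinearEquiv.ofBijective E ⟨hinj, hsurj⟩
    haveI : Module.Free ℤ K := Module.Free.of_basis κ₀
    haveI : Module.Finite ℤ K := Module.Finite.of_basis κ₀
    have h1 : Module.finrank ℤ (K × ℤ) = Module.finrank ℤ (Fin m → ℤ) := E'.finrank_eq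
    rw [Module.finrank_prod, Module.finrank_self, Module.finrank_pi, Fintype.card_fin,
      Module.finrank_eq_card_basis κ₀, Fintype.card_fin] at h1
    omega
  set κ : Module.Basis (Fin (m - 1)) ℤ K := κ₀.reindex (finCongr hrank) with hκ
  -- reduction of the basis mod D
  refine ⟨fun K_ j => (((κ K_ : Fin m → ℤ) j : ℤ) : ZMod D), ?_, ?_⟩
  · -- linear independence
    intro b hb
    set bz : Fin (m - 1) → ℤ := fun K_ => ((b K_).val : ℤ) with hbz
    have hbzc : ∀ K_, ((bz K_ : ℤ) : ZMod D) = b K_ := by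
      intro K_; simp [hbz, ZMod.natCast_val, ZMod.cast_id]
    set Y : K := ∑ K_, bz K_ • κ K_ with hY
    have hYdvd : ∀ i, (D : ℤ) ∣ (Y : Fin m → ℤ) i := by
      intro i
      rw [← ZMod.intCast_zmod_eq_zero_iff_dvd]
      have hYi : ((Y : Fin m → ℤ) i : ZMod D) = ∑ K_, b K_ * ((κ K_ : Fin m → ℤ) i : ZMod D) := by
        rw [hY]
        push_cast [Submodule.coe_sum, Finset.sum_apply, Pi.smul_apply, smul_eq_mul]
        exact Finset.sum_congr rfl fun K_ _ => by rw [hbzc]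
      rw [hYi]
      have := congrFun hb i
      simpa [Finset.sum_apply, Pi.smul_apply, smul_eq_mul] using this
    set u : Fin m → ℤ := fun i => (Y : Fin m → ℤ) i / D with hu
    have hDu : ∀ i, (D : ℤ) * u i = (Y : Fin m → ℤ) i := fun i =>
      Int.mul_ediv_cancel' (hYdvd i)
    have huker : φ u = 0 := by
      have h1 : φ ((D : ℤ) • u) = 0 := by
        rw [show ((D : ℤ) • u) = (Y : Fin m → ℤ) from funext fun i => by
          simpa [smul_eq_mul] using hDu i]
        exact LinearMap.mem_ker.mp Y.2
      rw [map_smul, smul_eq_mul] at h1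
      rcases mul_eq_zero.mp h1 with h | h
      · exact absurd h (by exact_mod_cast NeZero.ne D)
      · exact h
    set U : K := ⟨u, LinearMap.mem_ker.mpr huker⟩ with hU
    have hDUY : (D : ℤ) • U = Y := Subtype.ext (funext fun i => by
      simpa [smul_eq_mul] using hDu i)
    have hrep : bz = fun K_ => (D : ℤ) * κ.repr U K_ := by
      have h1 : ⇑(κ.repr Y) = bz := by rw [hY]; exact Module.Basis.repr_sum_self κ bz
      have h2 : κ.repr Y = (D : ℤ) • κ.repr U := by rw [← hDUY, map_smul]
      funext K_
      rw [← h1, h2]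
      simp [smul_eq_mul]
    funext K_
    have : b K_ = ((bz K_ : ℤ) : ZMod D) := (hbzc K_).symm
    rw [this, hrep]
    push_cast
    simp
  · -- span characterization
    intro c
    constructor
    · intro hct
      set cz : Fin m → ℤ := fun j => ((c j).val : ℤ) with hcz
      have hczc : ∀ j, ((cz j : ℤ) : ZMod D) = c j := by
        intro j; simp [hcz, ZMod.natCast_val, ZMod.cast_id]
      have hφc : (D : ℤ) ∣ φ cz := by
        rw [← ZMod.intCast_zmod_eq_zero_iff_dvd, hφ]
        push_cast
        rw [← hct]
        exact Finset.sum_congr rfl fun j _ => by rw [hczc, htc]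
      obtain ⟨q, hq⟩ := hφc
      obtain ⟨q', hq'⟩ := hco.dvd_of_dvd_mul_left (hq ▸ hgdvd cz : g ∣ (D : ℤ) * q)
      have hker : φ (cz - ((D : ℤ) * q') • z) = 0 := by
        rw [map_sub, map_smul, hz, smul_eq_mul, hq, hq']; ring
      set C : K := ⟨cz - ((D : ℤ) * q') • z, LinearMap.mem_ker.mpr hker⟩ with hC
      refine ⟨fun K_ => ((κ.repr C K_ : ℤ) : ZMod D), ?_⟩
      have hrepr : ∑ K_, κ.repr C K_ • κ K_ = C := κ.sum_repr C
      have hCval : ∀ j, (C : Fin m → ℤ) j = cz j - ((D : ℤ) * q') * z j := fun j => rfl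
      have hCj : ∀ j, (((C : Fin m → ℤ) j : ℤ) : ZMod D) = c j := by
        intro j
        rw [hCval j]
        push_cast
        rw [hczc]
        simp
      funext j
      have hval : (C : Fin m → ℤ) j = ∑ K_, κ.repr C K_ * (κ K_ : Fin m → ℤ) j := by
        conv_lhs => rw [← hrepr]
        simp only [Submodule.coe_sum, Finset.sum_apply, Submodule.coe_smul, Pi.smul_apply, smul_eq_mul]
      rw [← hCj j, hval]
      push_cast
      simp only [Finset.sum_apply, Pi.smul_apply, smul_eq_mul]
    · rintro ⟨b, rfl⟩
      have : ∀ K_, ∑ j, (((κ K_ : Fin m → ℤ) j : ℤ) : ZMod D) * t j = 0 := by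
        intro K_
        have h0 : φ (κ K_ : Fin m → ℤ) = 0 := LinearMap.mem_ker.mp (κ K_).2
        have : ((φ (κ K_ : Fin m → ℤ) : ℤ) : ZMod D) = 0 := by rw [h0]; simp
        rw [hφ] at this
        push_cast at this
        rw [← this]
        exact Finset.sum_congr rfl fun j _ => by rw [htc]
      rw [show ∑ j, (∑ K_, b K_ • fun j' => (((κ K_ : Fin m → ℤ) j' : ℤ) : ZMod D)) j * t j
          = ∑ K_, b K_ * ∑ j, (((κ K_ : Fin m → ℤ) j : ℤ) : ZMod D) * t j from ?_]
      · rw [Finset.sum_eq_zero fun K_ _ => by rw [this K_, mul_zero]]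
      · simp only [Finset.sum_apply, Pi.smul_apply, smul_eq_mul, Finset.sum_mul, Finset.mul_sum]
        rw [Finset.sum_comm]
        exact Finset.sum_congr rfl fun _ _ => Finset.sum_congr rfl fun _ _ => by ring




lemma good_cast {n d e₁ e₂ : ℕ} (h : e₁ = e₂) (v : Fin d → Fin n → ZMod D)
    (H : ∃ w : Fin e₂ → Fin n → ZMod D,
      (∀ b : Fin e₂ → ZMod D, ∑ j, b j • w j = 0 → b = 0) ∧
      (∀ u : Fin n → ZMod D, (∃ b : Fin e₂ → ZMod D, u = ∑ j, b j • w j) ↔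
        ∀ i, ∑ x, u x * v i x = 0) ∧
      (∀ u : Fin n → ZMod D, (∀ j, ∑ x, u x * w j x = 0) →
        ∃ a : Fin d → ZMod D, u = ∑ i, a i • v i)) :
    ∃ w : Fin e₁ → Fin n → ZMod D,
      (∀ b : Fin e₁ → ZMod D, ∑ j, b j • w j = 0 → b = 0) ∧
      (∀ u : Fin n → ZMod D, (∃ b : Fin e₁ → ZMod D, u = ∑ j, b j • w j) ↔
        ∀ i, ∑ x, u x * v i x = 0) ∧
      (∀ u : Fin n → ZMod D, (∀ j, ∑ x, u x * w j x = 0) →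
        ∃ a : Fin d → ZMod D, u = ∑ i, a i • v i) := by
  subst h; exact H


lemma main_ind (hD : 2 ≤ D) (d : ℕ) : ∀ (n : ℕ) (v : Fin d → Fin n → ZMod D),
    (∀ a : Fin d → ZMod D, ∑ i, a i • v i = 0 → a = 0) →
    ∃ w : Fin (n - d) → Fin n → ZMod D,
      (∀ b : Fin (n - d) → ZMod D, ∑ j, b j • w j = 0 → b = 0) ∧
      (∀ u : Fin n → ZMod D, (∃ b : Fin (n - d) → ZMod D, u = ∑ j, b j • w j) ↔
        ∀ i, ∑ x, u x * v i x = 0) ∧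
      (∀ u : Fin n → ZMod D, (∀ j, ∑ x, u x * w j x = 0) →
        ∃ a : Fin d → ZMod D, u = ∑ i, a i • v i) := by
  induction d with
  | zero =>
    intro n v _
    refine ⟨fun j => Pi.single j 1, ?_, ?_, ?_⟩
    · intro b hb
      funext i
      have := congrFun hb i
      simpa [Finset.sum_apply, Pi.single_apply] using this
    · intro u
      constructor
      · intro _ i; exact i.elim0
      · intro _
        refine ⟨u, ?_⟩
        funext i
        simp [Finset.sum_apply, Pi.single_apply]
    · intro u hu
      refine ⟨fun i => i.elim0, ?_⟩
      have h0 : u = 0 := by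
        funext x
        have := hu x
        simpa [Pi.single_apply] using this
      rw [h0]
      simp
  | succ d IH =>
    intro n v hv
    have hv' : ∀ a : Fin d → ZMod D, ∑ i, a i • v i.castSucc = 0 → a = 0 := by
      intro a ha
      have hsnoc : ∑ i, (Fin.snoc a (0 : ZMod D) : Fin (d + 1) → ZMod D) i • v i = 0 := by
        rw [Fin.sum_univ_castSucc]
        simp only [Fin.snoc_castSucc, Fin.snoc_last, zero_smul, add_zero]
        exact ha
      have h0 := hv _ hsnoc
      funext i
      have := congrFun h0 i.castSucc
      simpa [Fin.snoc_castSucc] using this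
    have hdn : d + 1 ≤ n := card_le hD v hv
    obtain ⟨w, hw1, hw2, hw3⟩ := IH n (fun i => v i.castSucc) hv'

    have hbez : ∃ s : Fin (n - d) → ZMod D,
        ∑ j, s j * (∑ x, v (Fin.last d) x * w j x) = 1 := by
      apply exists_bezout hD
      intro c hall
      have hperp : ∀ j, ∑ x, (c • v (Fin.last d)) x * w j x = 0 := by
        intro j
        have hc : ∑ x, (c • v (Fin.last d)) x * w j x
            = c * ∑ x, v (Fin.last d) x * w j x := by
          rw [Finset.mul_sum]
          exact Finset.sum_congr rfl fun x _ => by simp [mul_assoc]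
        rw [hc]
        exact hall j
      obtain ⟨a, ha⟩ := hw3 _ hperp
      by_contra hc0
      have hrel : ∑ i, (Fin.snoc a (-c) : Fin (d + 1) → ZMod D) i • v i = 0 := by
        rw [Fin.sum_univ_castSucc]
        simp only [Fin.snoc_castSucc, Fin.snoc_last]
        rw [← ha, neg_smul]
        abel
      have := congrFun (hv _ hrel) (Fin.last d)
      simp only [Fin.snoc_last, Pi.zero_apply] at this
      exact hc0 (neg_eq_zero.mp this)
    obtain ⟨s, hs⟩ := hbez
    obtain ⟨k, hk1, hk2⟩ :=
      kernel_basis hD (fun j => ∑ x, v (Fin.last d) x * w j x) s hs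

    refine good_cast (show n - (d + 1) = (n - d) - 1 by omega) v ?_
    refine ⟨fun K_ => ∑ j, k K_ j • w j, ?_, ?_, ?_⟩
    · -- linear independence
      intro b hb
      beta_reduce at hb
      rw [smul_collect] at hb
      have hc := hw1 _ hb
      apply hk1
      funext j
      have := congrFun hc j
      simpa [Finset.sum_apply, smul_eq_mul] using this
    · -- span = perp of v
      intro u
      constructor
      · rintro ⟨b, hbu⟩
        beta_reduce at hbu
        have hbu2 : u = ∑ j, (∑ K_, b K_ * k K_ j) • w j := by
          rw [hbu]; exact smul_collect b k w
        intro i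
        induction i using Fin.lastCases with
        | last =>
          have hchain : ∑ x, u x * v (Fin.last d) x
              = ∑ j, (∑ K_, b K_ * k K_ j) * ∑ x, v (Fin.last d) x * w j x := by
            calc ∑ x, u x * v (Fin.last d) x
                = ∑ x, v (Fin.last d) x * u x :=
                  Finset.sum_congr rfl fun x _ => mul_comm _ _
              _ = _ := by rw [hbu2, pair_sum]
          rw [hchain]
          refine (hk2 _).mpr ⟨b, ?_⟩
          funext j
          simp [Finset.sum_apply, smul_eq_mul]
        | cast i' => exact (hw2 u).mp ⟨_, hbu2⟩ i'
      · intro hu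
        have h1 : ∀ i' : Fin d, ∑ x, u x * v i'.castSucc x = 0 :=
          fun i' => hu i'.castSucc
        obtain ⟨c, hcu⟩ := (hw2 u).mpr h1
        have hct : ∑ j, c j * (∑ x, v (Fin.last d) x * w j x) = 0 := by
          have h2 := hu (Fin.last d)
          rw [← (pair_sum (v (Fin.last d)) c w), ← hcu]
          rw [← h2]
          exact Finset.sum_congr rfl fun x _ => by ring
        obtain ⟨b, hbk⟩ := (hk2 c).mp hct
        refine ⟨b, ?_⟩
        beta_reduce
        rw [hcu]
        rw [smul_collect]
        refine Finset.sum_congr rfl fun j _ => ?_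
        rw [congrFun hbk j]
        simp [Finset.sum_apply, smul_eq_mul]
    · -- perp of w' lands in span of v
      intro u hu
      beta_reduce at hu
      have hμdef : ∑ x, u x * (∑ l, s l • w l) x = ∑ l, s l * ∑ x, u x * w l x :=
        pair_sum u s w
      set μ := ∑ x, u x * (∑ l, s l • w l) x with hμ
      have hp : ∀ b : Fin ((n - d) - 1) → ZMod D,
          ∑ x, u x * (∑ K_, b K_ • ∑ l, k K_ l • w l) x = 0 := by
        intro b
        have hps := pair_sum u b (fun K_ => ∑ l, k K_ l • w l)
        beta_reduce at hps
        rw [hps]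
        exact Finset.sum_eq_zero fun K_ _ => by rw [hu K_, mul_zero]
      have hA : ∀ j, ∑ x, u x * w j x = (∑ x, v (Fin.last d) x * w j x) * μ := by
        intro j
        set tj := ∑ x, v (Fin.last d) x * w j x with htj
        set P : Fin (n - d) → ZMod D := Pi.single j (1 : ZMod D) with hP
        set c' : Fin (n - d) → ZMod D := P - tj • s with hc'
        have hc'app : ∀ l, c' l = P l - tj * s l := by
          intro l
          rw [hc']
          simp
        have hct : ∑ l, c' l * (∑ x, v (Fin.last d) x * w l x) = 0 := by
          simp only [hc'app, sub_mul]
          rw [Finset.sum_sub_distrib]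
          have h1 : ∑ l, P l * (∑ x, v (Fin.last d) x * w l x) = tj := by
            rw [Finset.sum_eq_single j]
            · simp [hP, htj]
            · intro l _ hl; simp [hP, Pi.single_apply, hl]
            · simp
          have h2 : ∑ l, tj * s l * (∑ x, v (Fin.last d) x * w l x) = tj := by
            calc ∑ l, tj * s l * (∑ x, v (Fin.last d) x * w l x)
                = tj * ∑ l, s l * (∑ x, v (Fin.last d) x * w l x) := by
                  rw [Finset.mul_sum]
                  exact Finset.sum_congr rfl fun l _ => by ring
              _ = tj := by rw [hs, mul_one]
          rw [h1, h2, sub_self]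
        obtain ⟨b, hbk⟩ := (hk2 _).mp hct
        have hsum1 : ∑ l, c' l • w l = w j - tj • ∑ l, s l • w l := by
          have : ∀ l, c' l • w l = P l • w l - (tj * s l) • w l := by
            intro l; rw [hc'app l, sub_smul]
          rw [Finset.sum_congr rfl fun l _ => this l]
          rw [Finset.sum_sub_distrib]
          congr 1
          · rw [Finset.sum_eq_single j]
            · simp [hP]
            · intro l _ hl; simp [hP, Pi.single_apply, hl]
            · simp
          · rw [Finset.smul_sum]
            exact Finset.sum_congr rfl fun l _ => by rw [smul_smul]
        have hsum2 : ∑ l, c' l • w l = ∑ K_, b K_ • ∑ l, k K_ l • w l := by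
          rw [smul_collect]
          refine Finset.sum_congr rfl fun l _ => ?_
          rw [congrFun hbk l]
          simp [Finset.sum_apply, smul_eq_mul]
        have hkey := hp b
        rw [← hsum2, hsum1] at hkey
        have hexp : ∑ x, u x * (w j - tj • ∑ l, s l • w l) x
            = (∑ x, u x * w j x) - tj * μ := by
          simp only [Pi.sub_apply, Pi.smul_apply, smul_eq_mul, mul_sub]
          rw [Finset.sum_sub_distrib]
          congr 1
          rw [hμ, Finset.mul_sum]
          exact Finset.sum_congr rfl fun x _ => by ring
        rw [hexp] at hkey
        exact sub_eq_zero.mp hkey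
      have hB : ∀ j, ∑ x, (u - μ • v (Fin.last d)) x * w j x = 0 := by
        intro j
        simp only [Pi.sub_apply, Pi.smul_apply, smul_eq_mul, sub_mul]
        rw [Finset.sum_sub_distrib, hA j]
        have h3 : ∑ x, μ * v (Fin.last d) x * w j x
            = (∑ x, v (Fin.last d) x * w j x) * μ := by
          rw [Finset.sum_mul]
          exact Finset.sum_congr rfl fun x _ => by ring
        rw [h3, sub_self]
      obtain ⟨a, ha⟩ := hw3 _ hB
      refine ⟨Fin.snoc a μ, ?_⟩
      rw [Fin.sum_univ_castSucc]
      simp only [Fin.snoc_castSucc, Fin.snoc_last]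
      rw [← ha]
      abel

end Stmt9Aux

/-- If `V ⊆ (ZMod D)^n` is spanned by a linearly independent family of `d`
vectors, then its orthogonal complement (w.r.t. the standard bilinear form) is
spanned by a linearly independent family of `n - d` vectors. -/
theorem stmt9 (D n d : ℕ) (hD : 2 ≤ D)
    (v : Fin d → Fin n → ZMod D)
    (hv : ∀ a : Fin d → ZMod D, ∑ i, a i • v i = 0 → a = 0) :
    ∃ w : Fin (n - d) → Fin n → ZMod D,
      (∀ a : Fin (n - d) → ZMod D, ∑ i, a i • w i = 0 → a = 0) ∧
      (Submodule.span (ZMod D) (Set.range w) : Set (Fin n → ZMod D)) =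
        {u : Fin n → ZMod D |
          ∀ x ∈ Submodule.span (ZMod D) (Set.range v), ∑ i, u i * x i = 0} := by
  obtain ⟨w, h1, h2, _⟩ := Stmt9Aux.main_ind hD d n v hv
  refine ⟨w, h1, ?_⟩
  ext u
  simp only [SetLike.mem_coe, Set.mem_setOf_eq]
  rw [Submodule.mem_span_range_iff_exists_fun (ZMod D)]
  constructor
  · rintro ⟨c, hc⟩ x hx
    have hperp : ∀ i, ∑ y, u y * v i y = 0 := (h2 u).mp ⟨c, hc.symm⟩
    induction hx using Submodule.span_induction with
    | mem x hm =>
      obtain ⟨i, rfl⟩ := hm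
      exact hperp i
    | zero => simp
    | add x y _ _ hx hy =>
      simp only [Pi.add_apply, mul_add]
      rw [Finset.sum_add_distrib, hx, hy, add_zero]
    | smul r x _ hx =>
      simp only [Pi.smul_apply, smul_eq_mul]
      calc ∑ i, u i * (r * x i) = r * ∑ i, u i * x i := by
            rw [Finset.mul_sum]
            exact Finset.sum_congr rfl fun i _ => by ring
        _ = 0 := by rw [hx, mul_zero]
  · intro hx
    have hperp : ∀ i, ∑ y, u y * v i y = 0 := fun i =>
      hx (v i) (Submodule.subset_span (Set.mem_range_self i))
    obtain ⟨b, hb⟩ := (h2 u).mpr hperp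
    exact ⟨b, hb.symm⟩
end

section
/- Let x, y ∈ (Z/DZ)^{2n}. There exists a matrix M over Z/DZ with M^T Ω M = Ω (where Ω = [[0, I], [−I, 0]]) such that x = M y, if and only if gcd(x) = gcd(y), where gcd(v) denotes the greatest divisor d of D with (D/d)·v = 0. -/
open Matrix

namespace Stmt14

/-- coprime shift -/
lemma exists_coprime_shift (A B m : ℕ) (hm : m ≠ 0)
    (h : Nat.gcd (Nat.gcd A B) m = 1) :
    ∃ t : ℕ, Nat.Coprime (A + t * B) m := by
  refine ⟨(m.primeFactors.filter (fun p ↦ ¬ p ∣ A)).prod id, Nat.coprime_of_dvd ?_⟩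
  intro p pp hpAB hpm
  by_cases hpA : p ∣ A
  · have htB : p ∣ (m.primeFactors.filter (fun p ↦ ¬ p ∣ A)).prod id * B := by
      have := Nat.dvd_sub hpAB hpA
      rwa [Nat.add_sub_cancel_left] at this
    rcases pp.dvd_mul.mp htB with h1 | h1
    · obtain ⟨q, hq, hq'⟩ := (pp.prime.dvd_finset_prod_iff id).mp h1
      rw [Finset.mem_filter] at hq
      rw [(Nat.prime_dvd_prime_iff_eq pp (Nat.prime_of_mem_primeFactors hq.1)).mp hq'] at hpA
      exact hq.2 hpA
    · have : p ∣ 1 := h ▸ Nat.dvd_gcd (Nat.dvd_gcd hpA h1) hpm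
      exact pp.one_lt.ne' (Nat.eq_one_of_dvd_one this)
  · have hpt : p ∣ (m.primeFactors.filter (fun p ↦ ¬ p ∣ A)).prod id :=
      Finset.dvd_prod_of_mem id (Finset.mem_filter.mpr
        ⟨Nat.mem_primeFactors.mpr ⟨pp, hpm, hm⟩, hpA⟩)
    exact hpA ((Nat.dvd_add_right (hpt.mul_right B)).mp (by rwa [Nat.add_comm] at hpAB))

variable {D : ℕ} [NeZero D]

lemma dvd_val_of_dvd {d : ℕ} (hd : d ∣ D) {a : ZMod D} (h : (d : ZMod D) ∣ a) :
    d ∣ a.val := by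
  obtain ⟨c, rfl⟩ := h
  have : ((d : ZMod D) * c) = ((d * c.val : ℕ) : ZMod D) := by
    push_cast [ZMod.natCast_zmod_val]; ring
  rw [this, ZMod.val_natCast]
  exact (Nat.dvd_mod_iff hd).mpr ⟨c.val, rfl⟩

lemma cast_dvd_of_dvd_val {d : ℕ} {a : ZMod D} (h : d ∣ a.val) : (d : ZMod D) ∣ a := by
  obtain ⟨c, hc⟩ := h
  exact ⟨(c : ZMod D), by rw [← Nat.cast_mul, ← hc, ZMod.natCast_zmod_val]⟩


lemma sl2_step (a b : ZMod D) :
    ∃ p q r s : ZMod D, p * s - q * r = 1 ∧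
      p * a + q * b = ((Nat.gcd (Nat.gcd a.val b.val) D : ℕ) : ZMod D) ∧
      r * a + s * b = 0 := by
  have hD : D ≠ 0 := NeZero.ne D
  set G : ℕ := Nat.gcd (Nat.gcd a.val b.val) D with hG
  have hGD : G ∣ D := Nat.gcd_dvd_right _ _
  have hGa : G ∣ a.val := (Nat.gcd_dvd_left _ _).trans (Nat.gcd_dvd_left _ _)
  have hGb : G ∣ b.val := (Nat.gcd_dvd_left _ _).trans (Nat.gcd_dvd_right _ _)
  have hG0 : G ≠ 0 := Nat.gcd_ne_zero_right hD
  obtain ⟨A₁, hA₁⟩ := hGa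
  obtain ⟨B₁, hB₁⟩ := hGb
  obtain ⟨D₁, hD₁⟩ := hGD
  have hGD : G ∣ D := ⟨D₁, hD₁⟩
  have hD₁0 : D₁ ≠ 0 := by rintro rfl; exact hD (by simp [hD₁])
  have h1 : Nat.gcd (Nat.gcd A₁ B₁) D₁ = 1 := by
    have key : Nat.gcd (Nat.gcd (G * A₁) (G * B₁)) (G * D₁)
        = G * Nat.gcd (Nat.gcd A₁ B₁) D₁ := by
      rw [Nat.gcd_mul_left, Nat.gcd_mul_left]
    have key2 : G * Nat.gcd (Nat.gcd A₁ B₁) D₁ = G * 1 := by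
      rw [← key, ← hA₁, ← hB₁, ← hD₁, mul_one]
    exact Nat.eq_of_mul_eq_mul_left (Nat.pos_of_ne_zero hG0) key2
  obtain ⟨t, ht⟩ := exists_coprime_shift A₁ B₁ D₁ hD₁0 h1
  set tz : ZMod D := (t : ZMod D) with htz
  set a' : ZMod D := a + tz * b with ha'def
  have ha'cast : a' = ((G * (A₁ + t * B₁) : ℕ) : ZMod D) := by
    rw [ha'def, ← ZMod.natCast_zmod_val a, ← ZMod.natCast_zmod_val b, hA₁, hB₁]
    push_cast; ring
  have hgcda' : Nat.gcd a'.val D = G := by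
    rw [ha'cast, ZMod.val_natCast, ← Nat.gcd_rec, Nat.gcd_comm D]
    conv_lhs => rw [hD₁]
    rw [Nat.gcd_mul_left, ht, mul_one]
  obtain ⟨d, hdD, u, hu, ha'⟩ := ZMod.eq_unit_mul_divisor a'
  obtain ⟨uu, huu⟩ := hu
  have hdG : d = G := by
    have h1' : d ∣ G := by
      rw [← hgcda']
      exact Nat.dvd_gcd (dvd_val_of_dvd hdD ⟨u, by rw [ha', mul_comm]⟩) hdD
    have h2 : G ∣ d := by
      have hca' : (G : ZMod D) ∣ a' := cast_dvd_of_dvd_val (hgcda' ▸ Nat.gcd_dvd_left _ _)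
      have hd2 : (d : ZMod D) = (↑uu⁻¹ : ZMod D) * a' := by
        rw [ha', ← huu, ← mul_assoc, uu.inv_mul, one_mul]
      have hcd : (G : ZMod D) ∣ (d : ZMod D) := by
        rw [hd2]; exact hca'.mul_left _
      have := dvd_val_of_dvd hGD hcd
      rw [ZMod.val_natCast] at this
      exact (Nat.dvd_mod_iff hGD).mp this
    exact Nat.dvd_antisymm h1' h2
  subst hdG
  -- now a' = u * G, u unit
  set α : ZMod D := (A₁ : ZMod D) with hα
  set β : ZMod D := (B₁ : ZMod D) with hβ
  have ha : a = (G : ZMod D) * α := by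
    rw [hα, ← ZMod.natCast_zmod_val a, hA₁]; push_cast; ring
  have hb : b = (G : ZMod D) * β := by
    rw [hβ, ← ZMod.natCast_zmod_val b, hB₁]; push_cast; ring
  have hui : (↑uu⁻¹ : ZMod D) * u = 1 := by rw [← huu]; exact uu.inv_mul
  have ha'2 : a + tz * b = u * (G : ZMod D) := by rw [← ha'def]; exact ha'
  refine ⟨(↑uu⁻¹ : ZMod D), (↑uu⁻¹ : ZMod D) * tz, -β, u - tz * β, ?_, ?_, ?_⟩
  · linear_combination hui
  · linear_combination ((↑uu⁻¹ : ZMod D)) * ha'2 + (G : ZMod D) * hui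
  · linear_combination u * hb - β * ha'2


variable {R : Type*} [CommRing R] {m : Type*} [Fintype m] [DecidableEq m]

/-- The standard symplectic form matrix. -/
def Om (m : Type*) [Fintype m] [DecidableEq m] (R : Type*) [CommRing R] :
    Matrix (m ⊕ m) (m ⊕ m) R := fromBlocks 0 1 (-1) 0

def IsSymp (M : Matrix (m ⊕ m) (m ⊕ m) R) : Prop :=
  Mᵀ * Om m R * M = Om m R

lemma isSymp_mul {M N : Matrix (m ⊕ m) (m ⊕ m) R} (hM : IsSymp M) (hN : IsSymp N) :
    IsSymp (M * N) := by
  unfold IsSymp at *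
  rw [transpose_mul]
  calc Nᵀ * Mᵀ * Om m R * (M * N) = Nᵀ * (Mᵀ * Om m R * M) * N := by
        simp only [Matrix.mul_assoc]
    _ = Om m R := by rw [hM]; exact hN

lemma om_mul_om : (Om m R) * (Om m R) = -1 := by
  simp [Om, fromBlocks_multiply, ← fromBlocks_one, fromBlocks_neg]

lemma isSymp_inv {M : Matrix (m ⊕ m) (m ⊕ m) R} (hM : IsSymp M) :
    ∃ L, IsSymp L ∧ L * M = 1 ∧ M * L = 1 := by
  have hLM : (-(Om m R * Mᵀ * Om m R)) * M = 1 := by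
    have : (Om m R) * (Mᵀ * Om m R * M) = Om m R * Om m R := by rw [hM]
    rw [om_mul_om] at this
    calc (-(Om m R * Mᵀ * Om m R)) * M = -(Om m R * (Mᵀ * Om m R * M)) := by
          simp only [Matrix.neg_mul, Matrix.mul_assoc]
      _ = 1 := by rw [this]; simp
  have hML : M * (-(Om m R * Mᵀ * Om m R)) = 1 := mul_eq_one_comm.mp hLM
  refine ⟨-(Om m R * Mᵀ * Om m R), ?_, hLM, hML⟩
  set L := -(Om m R * Mᵀ * Om m R) with hL
  unfold IsSymp
  calc Lᵀ * Om m R * L = Lᵀ * (Mᵀ * Om m R * M) * L := by rw [hM]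
    _ = (M * L)ᵀ * Om m R * (M * L) := by
        rw [transpose_mul]; simp only [Matrix.mul_assoc]
    _ = Om m R := by rw [hML]; simp

lemma isSymp_blockDiag {p q r s : m → R} (h : ∀ i, p i * s i - q i * r i = 1) :
    IsSymp (fromBlocks (diagonal p) (diagonal q) (diagonal r) (diagonal s)) := by
  unfold IsSymp Om
  simp only [fromBlocks_transpose, diagonal_transpose, fromBlocks_multiply,
    Matrix.mul_zero, Matrix.zero_mul, Matrix.mul_one, Matrix.one_mul,
    Matrix.mul_neg, Matrix.neg_mul, zero_add, add_zero, diagonal_mul_diagonal,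
    Matrix.mul_zero]
  ext i j
  rcases i with i | i <;> rcases j with j | j <;> by_cases hij : i = j <;>
    simp [fromBlocks, diagonal, Matrix.one_apply, hij, Matrix.neg_apply, Matrix.add_apply,
      Matrix.of_apply]
  all_goals first
    | ring1
    | (subst hij; linear_combination h i)
    | (subst hij; linear_combination - h i)

lemma isSymp_shear {S : Matrix m m R} (hS : Sᵀ = S) :
    IsSymp (fromBlocks 1 0 S 1) := by
  unfold IsSymp Om
  simp only [fromBlocks_transpose, transpose_zero, transpose_one, fromBlocks_multiply,
    Matrix.mul_zero, Matrix.zero_mul, Matrix.mul_one, Matrix.one_mul,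
    Matrix.mul_neg, Matrix.neg_mul, zero_add, add_zero, neg_zero]
  rw [hS]
  simp

lemma isSymp_gl {A B : Matrix m m R} (hAB : A * B = 1) :
    IsSymp (fromBlocks A 0 0 Bᵀ) := by
  have hBA : B * A = 1 := mul_eq_one_comm.mp hAB
  unfold IsSymp Om
  simp only [fromBlocks_transpose, transpose_zero, transpose_transpose, fromBlocks_multiply,
    Matrix.mul_zero, Matrix.zero_mul, Matrix.mul_one, Matrix.one_mul,
    Matrix.mul_neg, Matrix.neg_mul, zero_add, add_zero, neg_zero]
  rw [← transpose_mul, hBA, transpose_one]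




section Main
variable {R : Type*} [CommRing R] {m : Type*} [Fintype m] [DecidableEq m]

lemma mulVec_blockDiag (p q r s c d : m → R) :
    (fromBlocks (diagonal p) (diagonal q) (diagonal r) (diagonal s)).mulVec (Sum.elim c d)
      = Sum.elim (fun i => p i * c i + q i * d i) (fun i => r i * c i + s i * d i) := by
  rw [fromBlocks_mulVec]
  ext x
  cases x <;> simp [mulVec_diagonal]

lemma mulVec_shear (S : Matrix m m R) (c : m → R) :
    (fromBlocks (1 : Matrix m m R) (0 : Matrix m m R) S (1 : Matrix m m R)).mulVec (Sum.elim c 0) = Sum.elim c (S.mulVec c) := by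
  rw [fromBlocks_mulVec]
  ext x
  cases x <;> simp

lemma mulVec_gl (A B : Matrix m m R) (c : m → R) :
    (fromBlocks A (0 : Matrix m m R) (0 : Matrix m m R) Bᵀ).mulVec (Sum.elim c 0) = Sum.elim (A.mulVec c) 0 := by
  rw [fromBlocks_mulVec]
  ext x
  cases x <;> simp

end Main

lemma finset_gcd_bezout {ι : Type*} [DecidableEq ι] (s : Finset ι) (f : ι → ℕ) :
    ∃ w : ι → ℤ, ((s.gcd f : ℕ) : ℤ) = ∑ i ∈ s, w i * (f i : ℤ) := by
  induction s using Finset.induction with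
  | empty => exact ⟨0, by simp⟩
  | @insert a s ha ih =>
    obtain ⟨w, hw⟩ := ih
    refine ⟨fun i => if i = a then Nat.gcdA (f a) (s.gcd f) else Nat.gcdB (f a) (s.gcd f) * w i,
      ?_⟩
    rw [Finset.gcd_insert, Finset.sum_insert ha]
    have key : (Nat.gcd (f a) (s.gcd f) : ℤ)
        = f a * Nat.gcdA (f a) (s.gcd f) + (s.gcd f) * Nat.gcdB (f a) (s.gcd f) :=
      Nat.gcd_eq_gcd_ab _ _
    have hcoe : ((GCDMonoid.gcd (f a) (s.gcd f) : ℕ) : ℤ) = Nat.gcd (f a) (s.gcd f) := by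
      norm_cast
    rw [hcoe, key]
    beta_reduce
    rw [if_pos rfl, Finset.sum_congr rfl (fun i hi =>
      by rw [if_neg (by rintro rfl; exact ha hi)])]
    have : ∑ i ∈ s, Nat.gcdB (f a) (s.gcd f) * w i * (f i : ℤ)
        = Nat.gcdB (f a) (s.gcd f) * ∑ i ∈ s, w i * (f i : ℤ) := by
      rw [Finset.mul_sum]; exact Finset.sum_congr rfl fun i _ => by ring
    rw [this, ← hw]
    ring

section ZModPart
variable {D : ℕ} [NeZero D]

/-- the gcd invariant of a vector -/
def gcdv {n : ℕ} (v : Fin n ⊕ Fin n → ZMod D) : ℕ :=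
  Nat.gcd (Finset.univ.gcd fun i => (v i).val) D

lemma gcdv_dvd_D {n : ℕ} (v : Fin n ⊕ Fin n → ZMod D) : gcdv v ∣ D :=
  Nat.gcd_dvd_right _ _

lemma gcdv_dvd_val {n : ℕ} (v : Fin n ⊕ Fin n → ZMod D) (i : Fin n ⊕ Fin n) :
    gcdv v ∣ (v i).val :=
  (Nat.gcd_dvd_left _ _).trans (Finset.gcd_dvd (Finset.mem_univ i))

lemma gcdv_dvd_of_mulVec {n : ℕ} (N : Matrix (Fin n ⊕ Fin n) (Fin n ⊕ Fin n) (ZMod D))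
    (v : Fin n ⊕ Fin n → ZMod D) : gcdv v ∣ gcdv (N.mulVec v) := by
  refine Nat.dvd_gcd (Finset.dvd_gcd fun i _ => ?_) (gcdv_dvd_D v)
  refine dvd_val_of_dvd (gcdv_dvd_D v) ?_
  unfold Matrix.mulVec dotProduct
  exact Finset.dvd_sum fun j _ =>
    Dvd.dvd.mul_left (cast_dvd_of_dvd_val (gcdv_dvd_val v j)) _

lemma gcdv_eq_of_symp {n : ℕ} {M : Matrix (Fin n ⊕ Fin n) (Fin n ⊕ Fin n) (ZMod D)}
    (hM : IsSymp M) (v : Fin n ⊕ Fin n → ZMod D) : gcdv (M.mulVec v) = gcdv v := by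
  obtain ⟨L, hL, hLM, hML⟩ := isSymp_inv hM
  have h1 : gcdv v ∣ gcdv (M.mulVec v) := gcdv_dvd_of_mulVec M v
  have h2 : gcdv (M.mulVec v) ∣ gcdv v := by
    have hv : L.mulVec (M.mulVec v) = v := by
      rw [Matrix.mulVec_mulVec, hLM, Matrix.one_mulVec]
    conv_rhs => rw [← hv]
    exact gcdv_dvd_of_mulVec L _
  exact Nat.dvd_antisymm h2 h1

end ZModPart



section NormalForm
variable {D : ℕ} [NeZero D]

lemma exists_symp_normal {n : ℕ} (i₀ : Fin n) (v : Fin n ⊕ Fin n → ZMod D) :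
    ∃ M : Matrix (Fin n ⊕ Fin n) (Fin n ⊕ Fin n) (ZMod D), IsSymp M ∧
      M.mulVec v = Sum.elim (fun i => if i = i₀ then ((gcdv v : ℕ) : ZMod D) else 0) 0 := by
  classical
  set g : ℕ := gcdv v with hg
  have hgD : g ∣ D := gcdv_dvd_D v
  -- Phase 1 : block-diagonal SL2 to clear the second half
  have hv : v = Sum.elim (v ∘ Sum.inl) (v ∘ Sum.inr) := (Sum.elim_comp_inl_inr v).symm
  choose p1 q1 r1 s1 hdet1 hrowa hrowb using fun i => sl2_step (v (Sum.inl i)) (v (Sum.inr i))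
  set M₁ : Matrix (Fin n ⊕ Fin n) (Fin n ⊕ Fin n) (ZMod D) :=
    fromBlocks (diagonal p1) (diagonal q1) (diagonal r1) (diagonal s1) with hM₁
  have hM₁s : IsSymp M₁ := isSymp_blockDiag hdet1
  set G1 : Fin n → ℕ := fun i => Nat.gcd (Nat.gcd (v (Sum.inl i)).val (v (Sum.inr i)).val) D
    with hG1
  set c₁ : Fin n → ZMod D := fun i => ((G1 i : ℕ) : ZMod D) with hc₁
  have hv₁ : M₁.mulVec v = Sum.elim c₁ 0 := by
    conv_lhs => rw [hv]
    rw [hM₁, mulVec_blockDiag]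
    ext x
    cases x with
    | inl i => simpa using hrowa i
    | inr i => simpa using hrowb i
  have hgG1 : ∀ i, g ∣ G1 i := fun i =>
    Nat.dvd_gcd (Nat.dvd_gcd (gcdv_dvd_val v (Sum.inl i)) (gcdv_dvd_val v (Sum.inr i))) hgD
  have hgc₁val : ∀ i, g ∣ (c₁ i).val := fun i => by
    rw [hc₁]
    simp only [ZMod.val_natCast]
    exact (Nat.dvd_mod_iff hgD).mpr (hgG1 i)
  have hgc₁ : ∀ i, (g : ZMod D) ∣ c₁ i := fun i => cast_dvd_of_dvd_val (hgc₁val i)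
  -- Bezout combination expressing g
  have hgv₁ : gcdv (Sum.elim c₁ (0 : Fin n → ZMod D)) = g := by
    rw [← hv₁, hg]
    exact gcdv_eq_of_symp hM₁s v
  obtain ⟨w, hw⟩ := finset_gcd_bezout (Finset.univ : Finset (Fin n ⊕ Fin n))
    (fun i => ((Sum.elim c₁ (0 : Fin n → ZMod D)) i).val)
  set H : ℕ := Finset.univ.gcd (fun i => ((Sum.elim c₁ (0 : Fin n → ZMod D)) i).val) with hH
  have hgHD : Nat.gcd H D = g := hgv₁
  have hgZ : (g : ℤ) = (H : ℤ) * Nat.gcdA H D + (D : ℤ) * Nat.gcdB H D := by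
    rw [← hgHD]; exact Nat.gcd_eq_gcd_ab H D
  set tz : Fin n → ZMod D := fun i =>
    ((w (Sum.inl i) * Nat.gcdA H D : ℤ) : ZMod D) with htzdef
  have hcomb : ((g : ℕ) : ZMod D) = ∑ i : Fin n, tz i * c₁ i := by
    have hwZ : ((H : ℕ) : ℤ) = ∑ i : Fin n, w (Sum.inl i) * ((c₁ i).val : ℤ) := by
      rw [hH, hw, Fintype.sum_sum_type]
      simp
    have hZ2 : (g : ℤ) = (∑ i : Fin n, w (Sum.inl i) * Nat.gcdA H D * ((c₁ i).val : ℤ))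
        + (D : ℤ) * Nat.gcdB H D := by
      rw [hgZ, hwZ, Finset.sum_mul]
      congr 1
      exact Finset.sum_congr rfl fun i _ => by ring
    calc ((g : ℕ) : ZMod D) = (((g : ℕ) : ℤ) : ZMod D) := by push_cast; rfl
      _ = ∑ i : Fin n, tz i * c₁ i := by
          rw [hZ2]
          push_cast
          rw [ZMod.natCast_self]
          simp only [zero_mul, mul_zero, add_zero]
          refine Finset.sum_congr rfl fun i _ => ?_
          rw [htzdef]
          push_cast
          rw [ZMod.natCast_zmod_val]
  set t : Fin n → ZMod D := fun i => if i = i₀ then 0 else tz i with htdef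
  set d₀ : ZMod D := ∑ k, t k * c₁ k with hd₀def
  have hd₀ : tz i₀ * c₁ i₀ + d₀ = ((g : ℕ) : ZMod D) := by
    rw [hd₀def, hcomb]
    have : ∑ k, t k * c₁ k = (∑ k, tz k * c₁ k) - tz i₀ * c₁ i₀ := by
      calc ∑ k, t k * c₁ k
          = ∑ k, (tz k * c₁ k - (if k = i₀ then tz k * c₁ k else 0)) :=
            Finset.sum_congr rfl (fun k _ => by
              by_cases hk : k = i₀ <;> simp [htdef, hk])
        _ = (∑ k, tz k * c₁ k) - ∑ k, (if k = i₀ then tz k * c₁ k else 0) :=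
            Finset.sum_sub_distrib _ _
        _ = (∑ k, tz k * c₁ k) - tz i₀ * c₁ i₀ := by
            rw [Finset.sum_ite_eq' (Finset.univ : Finset (Fin n)) i₀]
            simp
    rw [this]
    ring
  -- Phase 2 : symmetric shear
  set S : Matrix (Fin n) (Fin n) (ZMod D) :=
    Matrix.of (fun j k => (if j = i₀ then t k else 0) + (if k = i₀ then t j else 0)) with hSdef
  have hSsym : Sᵀ = S := by
    ext j k
    simp only [transpose_apply, hSdef, Matrix.of_apply]
    ring
  set M₂ : Matrix (Fin n ⊕ Fin n) (Fin n ⊕ Fin n) (ZMod D) :=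
    fromBlocks 1 0 S 1 with hM₂
  have hM₂s : IsSymp M₂ := isSymp_shear hSsym
  set d₂ : Fin n → ZMod D := fun j => (if j = i₀ then d₀ else 0) + t j * c₁ i₀ with hd₂def
  have hSc : S.mulVec c₁ = d₂ := by
    ext j
    rw [hd₂def]
    simp only [Matrix.mulVec, dotProduct, hSdef, Matrix.of_apply, add_mul,
      Finset.sum_add_distrib, ite_mul, zero_mul]
    congr 1
    · by_cases hj : j = i₀ <;> simp [hj, hd₀def]
    · rw [Finset.sum_ite_eq' (Finset.univ : Finset (Fin n)) i₀]
      simp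
  have hv₂ : M₂.mulVec (Sum.elim c₁ 0) = Sum.elim c₁ d₂ := by
    rw [hM₂, mulVec_shear, hSc]
  -- facts about d₂
  have ht_i₀ : t i₀ = 0 := by rw [htdef]; simp
  have hgd₂ : ∀ j, (g : ZMod D) ∣ d₂ j := by
    intro j
    rw [hd₂def]
    refine dvd_add ?_ ((hgc₁ i₀).mul_left _)
    by_cases hj : j = i₀
    · have hdd : d₀ = ((g : ℕ) : ZMod D) - tz i₀ * c₁ i₀ := by
        rw [← hd₀]; ring
      simp only [hj, if_pos rfl, hdd]
      exact dvd_sub (dvd_refl _) ((hgc₁ i₀).mul_left _)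
    · simp [hj]
  -- Phase 3 : block-diagonal SL2 again
  choose p3 q3 r3 s3 hdet3 hrowc hrowd using fun i => sl2_step (c₁ i) (d₂ i)
  set M₃ : Matrix (Fin n ⊕ Fin n) (Fin n ⊕ Fin n) (ZMod D) :=
    fromBlocks (diagonal p3) (diagonal q3) (diagonal r3) (diagonal s3) with hM₃
  have hM₃s : IsSymp M₃ := isSymp_blockDiag hdet3
  set G3 : Fin n → ℕ := fun i => Nat.gcd (Nat.gcd (c₁ i).val (d₂ i).val) D with hG3
  set c₃ : Fin n → ZMod D := fun i => ((G3 i : ℕ) : ZMod D) with hc₃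
  have hv₃ : M₃.mulVec (Sum.elim c₁ d₂) = Sum.elim c₃ 0 := by
    rw [hM₃, mulVec_blockDiag]
    ext x
    cases x with
    | inl i => simpa using hrowc i
    | inr i => simpa using hrowd i
  have hG3D : ∀ i, G3 i ∣ D := fun i => Nat.gcd_dvd_right _ _
  have hgG3 : ∀ i, g ∣ G3 i := fun i =>
    Nat.dvd_gcd (Nat.dvd_gcd (hgc₁val i) (dvd_val_of_dvd hgD (hgd₂ i))) hgD
  have hG3i₀ : G3 i₀ = g := by
    refine Nat.dvd_antisymm ?_ (hgG3 i₀)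
    have h1 : (G3 i₀ : ZMod D) ∣ c₁ i₀ :=
      cast_dvd_of_dvd_val ((Nat.gcd_dvd_left _ _).trans (Nat.gcd_dvd_left _ _) :
        G3 i₀ ∣ (c₁ i₀).val)
    have h2 : (G3 i₀ : ZMod D) ∣ d₂ i₀ :=
      cast_dvd_of_dvd_val ((Nat.gcd_dvd_left _ _).trans (Nat.gcd_dvd_right _ _) :
        G3 i₀ ∣ (d₂ i₀).val)
    have hd₂i₀ : d₂ i₀ = d₀ := by
      rw [hd₂def]; simp [ht_i₀]
    have h3 : (G3 i₀ : ZMod D) ∣ ((g : ℕ) : ZMod D) := by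
      rw [← hd₀, ← hd₂i₀]
      exact dvd_add (h1.mul_left _) h2
    have h4 := dvd_val_of_dvd (hG3D i₀) h3
    rw [ZMod.val_natCast] at h4
    exact (Nat.dvd_mod_iff (hG3D i₀)).mp h4
  -- Phase 4 : GL-type shear to clear the other coordinates
  set w4 : Fin n → ZMod D := fun j => if j = i₀ then 0 else -(((G3 j / g : ℕ)) : ZMod D)
    with hw4
  set N : Matrix (Fin n) (Fin n) (ZMod D) :=
    Matrix.of (fun j k => if k = i₀ then w4 j else 0) with hN
  have hNN : N * N = 0 := by
    ext j k
    rw [Matrix.mul_apply]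
    simp only [hN, Matrix.of_apply, Matrix.zero_apply, ite_mul, zero_mul]
    rw [Finset.sum_ite_eq' (Finset.univ : Finset (Fin n)) i₀]
    simp [hw4]
  have hAB : (1 + N) * (1 - N) = 1 := by
    rw [add_mul, one_mul, mul_sub, mul_one, hNN]
    abel
  set M₄ : Matrix (Fin n ⊕ Fin n) (Fin n ⊕ Fin n) (ZMod D) :=
    fromBlocks (1 + N) 0 0 (1 - N)ᵀ with hM₄
  have hM₄s : IsSymp M₄ := isSymp_gl hAB
  have hAc : (1 + N).mulVec c₃ = fun i => if i = i₀ then ((g : ℕ) : ZMod D) else 0 := by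
    ext j
    have hNc : N.mulVec c₃ j = w4 j * c₃ i₀ := by
      simp only [Matrix.mulVec, dotProduct, hN, Matrix.of_apply, ite_mul, zero_mul]
      rw [Finset.sum_ite_eq' (Finset.univ : Finset (Fin n)) i₀]
      simp
    rw [Matrix.add_mulVec, Matrix.one_mulVec, Pi.add_apply, hNc]
    by_cases hj : j = i₀
    · simp only [hj, if_pos rfl]
      rw [hw4]
      simp [hc₃, hG3i₀]
    · simp only [hj, if_neg hj]
      rw [hw4]
      simp only [if_neg hj]
      have hc₃i₀ : c₃ i₀ = ((g : ℕ) : ZMod D) := by rw [hc₃]; simp [hG3i₀]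
      have hc₃j : c₃ j = ((G3 j / g * g : ℕ) : ZMod D) := by
        rw [hc₃]
        congr 1
        rw [Nat.div_mul_cancel (hgG3 j)]
      rw [hc₃i₀, hc₃j]
      push_cast
      ring
  have hv₄ : M₄.mulVec (Sum.elim c₃ 0) =
      Sum.elim (fun i => if i = i₀ then ((g : ℕ) : ZMod D) else 0) 0 := by
    rw [hM₄, mulVec_gl, hAc]
  -- assemble
  refine ⟨M₄ * (M₃ * (M₂ * M₁)), isSymp_mul hM₄s (isSymp_mul hM₃s (isSymp_mul hM₂s hM₁s)), ?_⟩
  rw [← Matrix.mulVec_mulVec, ← Matrix.mulVec_mulVec, ← Matrix.mulVec_mulVec,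
    hv₁, hv₂, hv₃, hv₄]

end NormalForm

end Stmt14

open Stmt14 in
/-- Two vectors of `(ZMod D)^{2n}` are related by a symplectic matrix iff they
have the same gcd (of their integer representatives together with `D`). -/
theorem stmt14 (D n : ℕ) (hD : 2 ≤ D) (x y : Fin n ⊕ Fin n → ZMod D) :
    (∃ M : Matrix (Fin n ⊕ Fin n) (Fin n ⊕ Fin n) (ZMod D),
        Mᵀ * Matrix.fromBlocks 0 1 (-1) 0 * M = Matrix.fromBlocks 0 1 (-1) 0 ∧
        M.mulVec y = x) ↔
    Nat.gcd (Finset.univ.gcd fun i => (x i).val) D =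
      Nat.gcd (Finset.univ.gcd fun i => (y i).val) D := by
  have : NeZero D := ⟨by omega⟩
  constructor
  · rintro ⟨M, hM, rfl⟩
    exact gcdv_eq_of_symp hM y
  · intro h
    rcases Nat.eq_zero_or_pos n with hn | hn
    · subst hn
      refine ⟨1, by simp, ?_⟩
      funext i
      rcases i with i | i <;> exact i.elim0
    · have hxy : gcdv x = gcdv y := h
      obtain ⟨Mx, hMxs, hMx⟩ := exists_symp_normal (⟨0, hn⟩ : Fin n) x
      obtain ⟨My, hMys, hMy⟩ := exists_symp_normal (⟨0, hn⟩ : Fin n) y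
      obtain ⟨L, hLs, hLMx, hMxL⟩ := isSymp_inv hMxs
      refine ⟨L * My, isSymp_mul hLs hMys, ?_⟩
      rw [← Matrix.mulVec_mulVec, hMy, ← hxy, ← hMx, Matrix.mulVec_mulVec, hLMx,
        Matrix.one_mulVec]
end
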